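/- Let k ≥ 1 be an integer, Q a primitive string, and ℓ a positive integer with 100k·|Q| ≤ ℓ. Let T be a string with |T| ≤ 1.5ℓ, and let P and P' be strings with ℓ ≤ |P| ≤ |T| and ℓ ≤ |P'| ≤ |T|. Suppose Q is a 2k-period (with some offset) of P and also a 2k-period (with some offset) of P', that δ_H(P, T[0..|P|)) ≤ k, and that δ_H(P', T[|T|−|P'|..|T|)) ≤ k. Then Q is a 6k-period of T; that is, there exists a nonnegative integer β with δ_H(T, Q^∞[β..β+|T|)) ≤ 6k. -/

import Mathlib

/-- Mismatch positions of two (equal-length) strings: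
`Mis(X,Y) = {i : X[i] ≠ Y[i]}`. -/
def mis {α : Type*} [DecidableEq α] [Inhabited α] (X Y : List α) : Finset ℕ :=
  (Finset.range (min X.length Y.length)).filter (fun i => X.getD i default ≠ Y.getD i default)

/-- Hamming distance of two (equal-length) strings: the number of mismatch positions. -/
def hdist {α : Type*} [DecidableEq α] [Inhabited α] (X Y : List α) : ℕ := (mis X Y).card

/-- The fragment `S[x..x+L)`. -/
def frag {α : Type*} (S : List α) (x L : ℕ) : List α := (S.drop x).take L

/-- `Q^∞[a..a+L)`: the string of length `L` whose `i`-th character is `Q[(a+i) mod |Q|]`. -/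
def qinf {α : Type*} [Inhabited α] (Q : List α) (a L : ℕ) : List α :=
  (List.range L).map (fun i => Q.getD ((a + i) % Q.length) default)

/-- A nonempty string is primitive if it is not of the form `Y^h` with `h ≥ 2`. -/
def Primitive {α : Type*} (Q : List α) : Prop :=
  Q ≠ [] ∧ ∀ (Y : List α) (h : ℕ), 2 ≤ h → Q ≠ (List.replicate h Y).flatten

/-- If `Q` is primitive with `100k·|Q| ≤ ℓ`, `|T| ≤ 1.5ℓ`, `P` (resp. `P'`) of length in
`[ℓ,|T|]` has `Q` as a `2k`-period and is a `k`-mismatch prefix (resp. suffix) of `T`,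
then `Q` is a `6k`-period of `T`. -/

lemma bezout (d q : ℕ) (hq : 0 < q) : ∃ t : ℕ, (t * d) % q = (Nat.gcd d q) % q := by
  have hb := Nat.gcd_eq_gcd_ab d q
  set u : ℤ := Nat.gcdA d q
  refine ⟨(u % q).toNat, ?_⟩
  have hqz : (q : ℤ) ≠ 0 := by exact_mod_cast hq.ne'
  have h1 : ((u % q).toNat : ℤ) = u % q := Int.toNat_of_nonneg (Int.emod_nonneg u hqz)
  have : (((u % q).toNat * d : ℕ) : ℤ) % q = ((Nat.gcd d q : ℕ) : ℤ) % q := by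
    push_cast [h1]
    rw [Int.mul_emod, Int.emod_emod_of_dvd u dvd_rfl, ← Int.mul_emod, hb]
    simp [Int.add_mul_emod_self_left, mul_comm]
  exact_mod_cast (by rw [← Int.natCast_mod, ← Int.natCast_mod] at this; exact_mod_cast this)

lemma eq_replicate_of_getD {α : Type*} [Inhabited α] (Y : List α) (hY : Y ≠ []) :
    ∀ (m : ℕ) (X : List α), X.length = m * Y.length →
      (∀ i < X.length, X.getD i default = Y.getD (i % Y.length) default) →
      X = (List.replicate m Y).flatten := by
  intro m
  induction m with
  | zero => intro X hlen _; simp at hlen; simp [hlen]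
  | succ m ih =>
    intro X hlen hget
    have hL : 0 < Y.length := List.length_pos_iff.mpr hY
    have hYX : Y.length ≤ X.length := by
      rw [hlen, Nat.succ_mul]; omega
    have h1 : X.take Y.length = Y := by
      apply List.ext_getElem (by simp [hYX])
      intro i h₁ h₂
      have hi : i < Y.length := h₂
      have hiX : i < X.length := lt_of_lt_of_le hi hYX
      have := hget i hiX
      rw [Nat.mod_eq_of_lt hi, List.getD_eq_getElem _ _ hiX, List.getD_eq_getElem _ _ hi] at this
      simpa [List.getElem_take] using this
    have h2 : X.drop Y.length = (List.replicate m Y).flatten := by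
      apply ih
      · rw [List.length_drop, hlen, Nat.succ_mul]; omega
      · intro i hi
        rw [List.length_drop] at hi
        have hiX : Y.length + i < X.length := by omega
        have := hget (Y.length + i) hiX
        rw [List.getD_eq_getElem _ _ hiX] at this
        rw [List.getD_eq_getElem _ _ (by rw [List.length_drop]; exact hi)]
        simp only [List.getElem_drop]
        rw [this, Nat.add_mod_left]
    conv_lhs => rw [← List.take_append_drop Y.length X]
    rw [h1, h2, List.replicate_succ, List.flatten_cons]

lemma prim_rot {α : Type*} [Inhabited α] {Q : List α} (hQ : Primitive Q) {d : ℕ}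
    (hd0 : 0 < d) (hdq : d < Q.length)
    (h : ∀ j < Q.length, Q.getD j default = Q.getD ((j + d) % Q.length) default) : False := by
  set q := Q.length with hqdef
  have hq : 0 < q := lt_trans hd0 hdq
  set g := Nat.gcd d q with hgdef
  have hg0 : 0 < g := Nat.gcd_pos_of_pos_left _ hd0
  have hgd : g ≤ d := Nat.le_of_dvd hd0 (Nat.gcd_dvd_left d q)
  have hgq : g ∣ q := Nat.gcd_dvd_right d q
  have hstep : ∀ j : ℕ, Q.getD (j % q) default = Q.getD ((j + d) % q) default := by
    intro j
    have := h (j % q) (Nat.mod_lt _ hq)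
    rwa [Nat.mod_add_mod] at this
  have hiter : ∀ (t j : ℕ), Q.getD (j % q) default = Q.getD ((j + t * d) % q) default := by
    intro t
    induction t with
    | zero => simp
    | succ t ih =>
      intro j
      rw [ih j, hstep (j + t * d)]
      congr 2
      ring_nf
  obtain ⟨t0, ht0⟩ := bezout d q hq
  have hgstep : ∀ j : ℕ, Q.getD (j % q) default = Q.getD ((j + g) % q) default := by
    intro j
    rw [hiter t0 j, ← Nat.add_mod_mod, ht0, Nat.add_mod_mod]
  have hgiter : ∀ (t j : ℕ), Q.getD (j % q) default = Q.getD ((j + t * g) % q) default := by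
    intro t
    induction t with
    | zero => simp
    | succ t ih =>
      intro j
      rw [ih j, hgstep (j + t * g)]
      congr 2
      ring_nf
  -- Q is (q/g)-fold replicate of its first g chars
  have hYne : Q.take g ≠ [] := by
    have : (Q.take g).length = g := by simp; omega
    intro hcon; rw [hcon] at this; simp at this; omega
  have hglt : g < q := lt_of_le_of_lt hgd hdq
  have hgl : (Q.take g).length = g := by
    rw [List.length_take]
    exact min_eq_left (le_of_lt hglt)
  have hrep := eq_replicate_of_getD (Q.take g) hYne (q / g) Q
    (by rw [hgl, Nat.div_mul_cancel hgq])
    (by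
      intro i hi
      have h1 : Q.getD i default = Q.getD (i % g) default := by
        have := hgiter (i / g) (i % g)
        rw [Nat.mod_add_div' i g] at this
        rw [Nat.mod_eq_of_lt hi] at this
        have hmm : i % g % q = i % g := Nat.mod_eq_of_lt (lt_trans (Nat.mod_lt _ hg0) hglt)
        rw [hmm] at this
        exact this.symm
      rw [h1, hgl]
      have him : i % g < g := Nat.mod_lt _ hg0
      simp only [List.getD_eq_getElem?_getD, List.getElem?_take, him, if_true])
  have hm2 : 2 ≤ q / g := by
    rcases hgq with ⟨c, hc⟩
    have hc0 : c ≠ 0 := by rintro rfl; simp at hc; omega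
    have hc1 : c ≠ 1 := by rintro rfl; simp at hc; omega
    have : q / g = c := by rw [hc, Nat.mul_div_cancel_left _ hg0]
    omega
  exact hQ.2 (Q.take g) (q / g) hm2 hrep

lemma getD_frag {α : Type*} [Inhabited α] (S : List α) (x L i : ℕ) (h : i < L) :
    (frag S x L).getD i default = S.getD (x + i) default := by
  simp [frag, List.getD_eq_getElem?_getD, List.getElem?_take, List.getElem?_drop, h]

lemma frag_length {α : Type*} (S : List α) (x L : ℕ) (h : x + L ≤ S.length) :
    (frag S x L).length = L := by simp [frag]; omega

lemma qinf_length {α : Type*} [Inhabited α] (Q : List α) (a L : ℕ) :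
    (qinf Q a L).length = L := by simp [qinf]

lemma getD_qinf {α : Type*} [Inhabited α] (Q : List α) (a L i : ℕ) (h : i < L) :
    (qinf Q a L).getD i default = Q.getD ((a + i) % Q.length) default := by
  simp [qinf, List.getD_eq_getElem?_getD, List.getElem?_range, h]

lemma mod_shift (q x y c : ℕ) (h : x % q = y % q) : (x + c) % q = (y + c) % q := by
  rw [← Nat.mod_add_mod, h, Nat.mod_add_mod]

lemma count_res (q a s L j0 : ℕ) (hq : 0 < q) (hj0 : j0 < q) :
    L / q ≤ ((Finset.Ico s (s + L)).filter (fun i => (a + i) % q = j0)).card := by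
  rcases Nat.eq_zero_or_pos (L / q) with h0 | h0
  · simp [h0]
  set i0 := (j0 + q - (a + s) % q) % q with hi0def
  have hi0 : i0 < q := Nat.mod_lt _ hq
  have key : ∀ t, (a + (s + i0 + t * q)) % q = j0 := by
    intro t
    have h1 : a + (s + i0 + t * q) = (a + s + i0) + t * q := by ring
    rw [h1, Nat.add_mul_mod_self_right]
    have h2 : (a + s + i0) % q = ((a + s) % q + i0) % q := by
      rw [Nat.mod_add_mod]
    rw [h2, hi0def, Nat.add_mod_mod]
    have h3 : (a + s) % q < q := Nat.mod_lt _ hq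
    have h4 : (a + s) % q + (j0 + q - (a + s) % q) = j0 + q := by omega
    rw [h4, Nat.add_mod_right, Nat.mod_eq_of_lt hj0]
  apply le_trans (le_of_eq (Finset.card_range (L / q)).symm)
  apply Finset.card_le_card_of_injOn (fun t => s + i0 + t * q)
  · intro t ht
    rw [Finset.mem_coe, Finset.mem_range] at ht
    rw [Finset.mem_coe, Finset.mem_filter, Finset.mem_Ico]
    dsimp only
    refine ⟨⟨by omega, ?_⟩, key t⟩
    have h5 : (t + 1) * q ≤ (L / q) * q := Nat.mul_le_mul_right q (Nat.succ_le_of_lt ht)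
    have h6 : (L / q) * q ≤ L := Nat.div_mul_le_self L q
    have h7 : (t + 1) * q = t * q + q := by ring
    omega
  · intro t1 h1 t2 h2 he
    simp only at he
    have : t1 * q = t2 * q := by omega
    exact Nat.eq_of_mul_eq_mul_right hq this

theorem stmt1 {α : Type*} [DecidableEq α] [Inhabited α]
    (k ℓ : ℕ) (hk : 1 ≤ k) (hℓ : 0 < ℓ)
    (Q T P P' : List α) (hQprim : Primitive Q) (hQℓ : 100 * k * Q.length ≤ ℓ)
    (hT : 2 * T.length ≤ 3 * ℓ)
    (hPl : ℓ ≤ P.length) (hPu : P.length ≤ T.length)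
    (hP'l : ℓ ≤ P'.length) (hP'u : P'.length ≤ T.length)
    (hPper : ∃ a : ℕ, hdist P (qinf Q a P.length) ≤ 2 * k)
    (hP'per : ∃ a : ℕ, hdist P' (qinf Q a P'.length) ≤ 2 * k)
    (hpre : hdist P (frag T 0 P.length) ≤ k)
    (hsuf : hdist P' (frag T (T.length - P'.length) P'.length) ≤ k) :
    ∃ β : ℕ, hdist T (qinf Q β T.length) ≤ 6 * k := by
  obtain ⟨a, hPa⟩ := hPper
  obtain ⟨a', hPa'⟩ := hP'per
  have hq : 0 < Q.length := List.length_pos_iff.mpr hQprim.1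
  set q := Q.length with hqdef
  set n := T.length with hndef
  set p := P.length with hpdef
  set p' := P'.length with hp'def
  set s := n - p' with hsdef
  have hqℓ : q ≤ ℓ := le_trans (Nat.le_mul_of_pos_left q (by positivity)) hQℓ
  have hsn : s + p' = n := by omega
  have hsp : s ≤ p := by omega
  -- convert prefix hypotheses to filters over ranges
  have hpre' : ((Finset.range p).filter
      (fun i => P.getD i default ≠ T.getD i default)).card ≤ k := by
    refine le_trans (le_of_eq ?_) hpre
    unfold hdist mis
    rw [frag_length T 0 p (by omega), ← hpdef, min_self]
    apply congrArg
    apply Finset.filter_congr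
    intro i hi
    rw [getD_frag T 0 p i (Finset.mem_range.mp hi), Nat.zero_add]
  have hPa2 : ((Finset.range p).filter
      (fun i => P.getD i default ≠ Q.getD ((a + i) % q) default)).card ≤ 2 * k := by
    refine le_trans (le_of_eq ?_) hPa
    unfold hdist mis
    rw [qinf_length, ← hpdef, min_self]
    apply congrArg
    apply Finset.filter_congr
    intro i hi
    rw [getD_qinf Q a p i (Finset.mem_range.mp hi)]
  -- suffix
  have hsuf' : ((Finset.range p').filter
      (fun j => P'.getD j default ≠ T.getD (s + j) default)).card ≤ k := by
    refine le_trans (le_of_eq ?_) hsuf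
    unfold hdist mis
    rw [frag_length T s p' (by omega), ← hp'def, min_self]
    apply congrArg
    apply Finset.filter_congr
    intro j hj
    rw [getD_frag T s p' j (Finset.mem_range.mp hj)]
  have hPa2' : ((Finset.range p').filter
      (fun j => P'.getD j default ≠ Q.getD ((a' + j) % q) default)).card ≤ 2 * k := by
    refine le_trans (le_of_eq ?_) hPa'
    unfold hdist mis
    rw [qinf_length, ← hp'def, min_self]
    apply congrArg
    apply Finset.filter_congr
    intro j hj
    rw [getD_qinf Q a' p' j (Finset.mem_range.mp hj)]
  -- mismatch sets A and B of T against the two periodic extensions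
  set A := (Finset.range p).filter
      (fun i => T.getD i default ≠ Q.getD ((a + i) % q) default) with hAdef
  set B := (Finset.range n).filter
      (fun i => s ≤ i ∧ T.getD i default ≠ Q.getD ((a' + (i - s)) % q) default) with hBdef
  have hA : A.card ≤ 3 * k := by
    have hsub : A ⊆ ((Finset.range p).filter
        (fun i => P.getD i default ≠ T.getD i default)) ∪
        ((Finset.range p).filter
        (fun i => P.getD i default ≠ Q.getD ((a + i) % q) default)) := by
      intro i hi
      rw [hAdef, Finset.mem_filter] at hi
      rw [Finset.mem_union, Finset.mem_filter, Finset.mem_filter]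
      by_cases hPT : P.getD i default = T.getD i default
      · exact Or.inr ⟨hi.1, by rw [hPT]; exact hi.2⟩
      · exact Or.inl ⟨hi.1, hPT⟩
    calc A.card ≤ _ := Finset.card_le_card hsub
    _ ≤ _ := Finset.card_union_le _ _
    _ ≤ k + 2 * k := Nat.add_le_add hpre' hPa2
    _ = 3 * k := by ring
  have hB : B.card ≤ 3 * k := by
    have hsub : B ⊆ (((Finset.range p').filter
        (fun j => P'.getD j default ≠ T.getD (s + j) default)) ∪
        ((Finset.range p').filter
        (fun j => P'.getD j default ≠ Q.getD ((a' + j) % q) default))).image (s + ·) := by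
      intro i hi
      rw [hBdef, Finset.mem_filter, Finset.mem_range] at hi
      obtain ⟨hin, hsi, hmis⟩ := hi
      rw [Finset.mem_image]
      refine ⟨i - s, ?_, by omega⟩
      rw [Finset.mem_union, Finset.mem_filter, Finset.mem_filter, Finset.mem_range]
      have hjp : i - s < p' := by omega
      have hsj : s + (i - s) = i := by omega
      by_cases hPT : P'.getD (i - s) default = T.getD (s + (i - s)) default
      · refine Or.inr ⟨hjp, ?_⟩
        rw [hPT, hsj]
        exact hmis
      · exact Or.inl ⟨hjp, hPT⟩
    calc B.card ≤ _ := Finset.card_le_card hsub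
    _ ≤ _ := Finset.card_image_le
    _ ≤ _ := Finset.card_union_le _ _
    _ ≤ k + 2 * k := Nat.add_le_add hsuf' hPa2'
    _ = 3 * k := by ring
  -- the offsets agree modulo q
  have hoff : (a + s) % q = a' % q := by
    by_contra hne
    set d := (a' % q + q - (a + s) % q) % q with hddef
    have hr1 : (a + s) % q < q := Nat.mod_lt _ hq
    have hr2 : a' % q < q := Nat.mod_lt _ hq
    have hdq : d < q := Nat.mod_lt _ hq
    have hd : ((a + s) % q + d) % q = a' % q := by
      rw [hddef, Nat.add_mod_mod,
        (by omega : (a + s) % q + (a' % q + q - (a + s) % q) = a' % q + q),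
        Nat.add_mod_right, Nat.mod_eq_of_lt hr2]
    have hd0 : 0 < d := by
      rcases Nat.eq_zero_or_pos d with h0 | h0
      · rw [h0, Nat.add_zero, Nat.mod_eq_of_lt hr1] at hd
        exact absurd hd hne
      · exact h0
    have hd' : (a + s + d) % q = a' % q := by
      rw [← Nat.mod_add_mod, hd]
    obtain ⟨j0, hj0q, hj0⟩ : ∃ j0, j0 < q ∧
        Q.getD j0 default ≠ Q.getD ((j0 + d) % q) default := by
      by_contra hall
      push_neg at hall
      exact prim_rot hQprim hd0 hdq hall
    have hcount := count_res q a s (p - s) j0 hq hj0q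
    rw [(by omega : s + (p - s) = p)] at hcount
    have h50 : 50 * k ≤ (p - s) / q := by
      rw [Nat.le_div_iff_mul_le hq]
      have h100 : 100 * k * q = 2 * (50 * k * q) := by ring
      omega
    have hCsub : (Finset.Ico s p).filter (fun i => (a + i) % q = j0) ⊆ A ∪ B := by
      intro i hi
      rw [Finset.mem_filter, Finset.mem_Ico] at hi
      obtain ⟨⟨hsi, hip⟩, hres⟩ := hi
      have hchar : Q.getD ((a + i) % q) default ≠ Q.getD ((a' + (i - s)) % q) default := by
        have he : (a' + (i - s)) % q = (j0 + d) % q := by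
          rw [mod_shift q a' (a + s + d) (i - s) hd'.symm,
            (by omega : a + s + d + (i - s) = a + i + d),
            ← Nat.mod_add_mod, hres]
        rw [hres, he]
        exact hj0
      rw [Finset.mem_union, hAdef, hBdef, Finset.mem_filter, Finset.mem_filter,
        Finset.mem_range, Finset.mem_range]
      by_cases hT1 : T.getD i default = Q.getD ((a + i) % q) default
      · refine Or.inr ⟨by omega, hsi, ?_⟩
        rw [← hT1] at hchar
        exact hchar
      · exact Or.inl ⟨hip, hT1⟩
    have : (50 : ℕ) * k ≤ 6 * k := by
      calc 50 * k ≤ (p - s) / q := h50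
      _ ≤ _ := hcount
      _ ≤ (A ∪ B).card := Finset.card_le_card hCsub
      _ ≤ A.card + B.card := Finset.card_union_le _ _
      _ ≤ 3 * k + 3 * k := Nat.add_le_add hA hB
      _ = 6 * k := by ring
    omega
  -- conclude with offset a
  refine ⟨a, ?_⟩
  have heq : hdist T (qinf Q a n) = ((Finset.range n).filter
      (fun i => T.getD i default ≠ Q.getD ((a + i) % q) default)).card := by
    unfold hdist mis
    rw [qinf_length, ← hndef, min_self]
    apply congrArg
    apply Finset.filter_congr
    intro i hi
    rw [getD_qinf Q a n i (Finset.mem_range.mp hi)]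
  rw [heq]
  have hsub : (Finset.range n).filter
      (fun i => T.getD i default ≠ Q.getD ((a + i) % q) default) ⊆ A ∪ B := by
    intro i hi
    rw [Finset.mem_filter, Finset.mem_range] at hi
    obtain ⟨hin, hmis⟩ := hi
    rw [Finset.mem_union, hAdef, hBdef, Finset.mem_filter, Finset.mem_filter,
      Finset.mem_range, Finset.mem_range]
    by_cases hip : i < p
    · exact Or.inl ⟨hip, hmis⟩
    · refine Or.inr ⟨hin, by omega, ?_⟩
      have he : (a' + (i - s)) % q = (a + i) % q := by
        rw [mod_shift q a' (a + s) (i - s) hoff.symm,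
          (by omega : a + s + (i - s) = a + i)]
      rw [he]
      exact hmis
  calc _ ≤ (A ∪ B).card := Finset.card_le_card hsub
  _ ≤ A.card + B.card := Finset.card_union_le _ _
  _ ≤ 3 * k + 3 * k := Nat.add_le_add hA hB
  _ = 6 * k := by ring
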